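/- Let $\mathcal{F}$ be a distribution over values in $(0,1]$ whose revenue curve in quantile space is concave with monopoly price $p^*$, quantile $q^*$, and satisfies the strong concavity condition: for any price $p'$ with quantile $q'$, $\mathrm{Rev}(p', \mathcal{F}) \le (1 - \frac{1}{4}(q^* - q')^2)\mathrm{Rev}(p^*, \mathcal{F})$. If two prices $p_1 < p_2$ both exceed $p^*$ (so their quantiles satisfy $q_2 \le q_1 \le q^*$) and $q_1 - q_2 \ge \gamma$, then $\mathrm{Rev}(p_1, \mathcal{F}) - \mathrm{Rev}(p_2, \mathcal{F}) \ge \frac{1}{4}\gamma^2 \cdot \mathrm{Rev}(p^*, \mathcal{F})$. -/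

import Mathlib

/-- for a concave revenue curve (in quantile space) with monopoly
quantile `q*` and the strong concavity property, two quantiles `q2 ≤ q1 ≤ q*`
with gap at least `γ` have revenue gap at least `(γ²/4)·R(q*)`. -/
theorem stmt_18 (R : ℝ → ℝ) (hR0 : R 0 = 0)
    (hconc : ConcaveOn ℝ (Set.Icc (0:ℝ) 1) R)
    (qstar : ℝ) (hqs : qstar ∈ Set.Icc (0:ℝ) 1)
    (hmax : ∀ q ∈ Set.Icc (0:ℝ) 1, R q ≤ R qstar)
    (hstrong : ∀ q ∈ Set.Icc (0:ℝ) 1, R q ≤ (1 - (qstar - q) ^ 2 / 4) * R qstar)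
    (q1 q2 γ : ℝ) (h20 : 0 ≤ q2) (h21 : q2 ≤ q1) (h1s : q1 ≤ qstar)
    (hγ0 : 0 ≤ γ) (hγ : γ ≤ q1 - q2) :
    γ ^ 2 / 4 * R qstar ≤ R q1 - R q2 := by
  obtain ⟨hs0, hs1⟩ := hqs
  have hRstar0 : 0 ≤ R qstar := by
    have := hmax 0 (by constructor <;> norm_num)
    linarith [this, hR0.ge]
  by_cases hq : qstar = q2
  · have hq12 : q1 = q2 := le_antisymm (hq ▸ h1s) h21
    have hγ0' : γ = 0 := le_antisymm (by linarith) hγ0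
    simp [hγ0', hq12]
  · have hd : 0 < qstar - q2 := lt_of_le_of_ne (by linarith) (fun h => hq (by linarith))
    set a := (qstar - q1) / (qstar - q2) with ha
    set b := (q1 - q2) / (qstar - q2) with hb
    have ha0 : 0 ≤ a := div_nonneg (by linarith) hd.le
    have hb0 : 0 ≤ b := div_nonneg (by linarith) hd.le
    have hab : a + b = 1 := by rw [ha, hb, ← add_div, div_eq_one_iff_eq hd.ne']; ring
    have hm2 : q2 ∈ Set.Icc (0:ℝ) 1 := ⟨h20, by linarith⟩
    have hms : qstar ∈ Set.Icc (0:ℝ) 1 := ⟨hs0, hs1⟩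
    have hcomb : a * q2 + b * qstar = q1 := by
      rw [ha, hb, div_mul_eq_mul_div, div_mul_eq_mul_div, ← add_div, div_eq_iff hd.ne']; ring
    have hcv := hconc.2 hm2 hms ha0 hb0 hab
    simp only [smul_eq_mul, hcomb] at hcv
    -- hcv : a * R q2 + b * R qstar ≤ R q1
    have hst2 := hstrong q2 hm2
    -- R q1 - R q2 ≥ b * (R qstar - R q2) ≥ b * (qstar - q2)^2/4 * R qstar
    have key : b * ((qstar - q2) ^ 2 / 4) * R qstar ≤ R q1 - R q2 := by
      have hx : a * R q2 + b * R q2 = R q2 := by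
        have : (a + b) * R q2 = R q2 := by rw [hab]; ring
        linarith [this, (by ring : (a + b) * R q2 = a * R q2 + b * R q2)]
      have h1 : b * (R qstar - R q2) ≤ R q1 - R q2 := by nlinarith [hx, hcv]
      have h2 : b * ((qstar - q2) ^ 2 / 4) * R qstar ≤ b * (R qstar - R q2) := by
        nlinarith
      linarith
    have hrw : b * ((qstar - q2) ^ 2 / 4) = (q1 - q2) * (qstar - q2) / 4 := by
      rw [hb, div_mul_eq_mul_div, div_eq_iff hd.ne']; ring
    have hγ2 : γ ^ 2 ≤ (q1 - q2) * (qstar - q2) := by nlinarith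
    nlinarith [key, hrw]
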